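/- Let d ∈ ℕ, B, K > 0, Ω := [-B,B]^d, and let σ be a Borel probability measure on Ω × [-K,K] with marginal σ_Ω on Ω. Let S = (d, N_1, ..., N_{L-1}, 1) be a neural network architecture and ρ : ℝ → ℝ locally Lipschitz continuous. Let f_σ : Ω → ℝ be a measurable function (the regression function) such that for every measurable f : Ω → ℝ one has ∫ |f(x)-y|² dσ(x,y) = ∫ |f_σ(x)-y|² dσ(x,y) + ∫ |f(x)-f_σ(x)|² dσ_Ω(x). Assume there does not exist a best approximation of f_σ in RNN_ρ^Ω(S) with respect to the L²(σ_Ω) norm, i.e. no g ∈ RNN_ρ^Ω(S) attains inf_{h ∈ RNN_ρ^Ω(S)} ‖f_σ - h‖_{L²(σ_Ω)}. Let ((x_i, y_i))_{i ∈ ℕ} be i.i.d. with distribution σ, and for N ∈ ℕ and f : Ω → ℝ set E_N(f) := (1/N) Σ_{i=1}^N |f(x_i) - y_i|². If (Φ_N)_{N ∈ ℕ} is a (random) sequence of neural networks with architecture S such that for every ε > 0 the probability of the event { E_N(R_ρ^Ω(Φ_N)) - inf_{f ∈ RNN_ρ^Ω(S)} E_N(f) > ε } tends to 0 as N → ∞,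 then ‖Φ_N‖_total → ∞ in probability as N → ∞. -/

import Mathlib

open scoped BigOperators ENNReal NNReal Pointwise
open Filter MeasureTheory Topology

abbrev NNLayer (N : ℕ → ℕ) (ℓ : ℕ) : Type :=
  (Fin (N (ℓ + 1)) → Fin (N ℓ) → ℝ) × (Fin (N (ℓ + 1)) → ℝ)

abbrev NNParams (L : ℕ) (N : ℕ → ℕ) : Type :=
  (ℓ : Fin L) → NNLayer N ℓ.val

noncomputable def nnAffine {N : ℕ → ℕ} {ℓ : ℕ} (W : NNLayer N ℓ) (x : Fin (N ℓ) → ℝ) :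
    Fin (N (ℓ + 1)) → ℝ :=
  fun i => (∑ j, W.1 i j * x j) + W.2 i

noncomputable def nnHidden (ρ : ℝ → ℝ) :
    (L : ℕ) → (N : ℕ → ℕ) → NNParams L N → (Fin (N 0) → ℝ) → Fin (N L) → ℝ
  | 0, _, _, x => x
  | L + 1, N, Φ, x =>
      nnHidden ρ L (fun k => N (k + 1))
        (fun ℓ => Φ ⟨ℓ.val + 1, Nat.succ_lt_succ ℓ.isLt⟩)
        (fun i => ρ (nnAffine (Φ ⟨0, Nat.succ_pos L⟩) x i))

noncomputable def nnRealization (ρ : ℝ → ℝ) :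
    (L : ℕ) → (N : ℕ → ℕ) → NNParams L N → (Fin (N 0) → ℝ) → Fin (N L) → ℝ
  | 0, _, _, x => x
  | L + 1, N, Φ, x =>
      nnAffine (Φ ⟨L, Nat.lt_succ_self L⟩)
        (nnHidden ρ L N (fun ℓ => Φ ⟨ℓ.val, Nat.lt_succ_of_lt ℓ.isLt⟩) x)

noncomputable def nnRealizationScalar (ρ : ℝ → ℝ) (L : ℕ) (N : ℕ → ℕ) (h : N L = 1)
    (Φ : NNParams L N) (x : Fin (N 0) → ℝ) : ℝ :=
  nnRealization ρ L N Φ x ⟨0, by rw [h]; exact Nat.one_pos⟩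

noncomputable def nnScalingNorm {L : ℕ} {N : ℕ → ℕ} (Φ : NNParams L N) : ℝ :=
  ⨆ ℓ : Fin L, ‖(Φ ℓ).1‖

noncomputable def nnTotalNorm {L : ℕ} {N : ℕ → ℕ} (Φ : NNParams L N) : ℝ :=
  nnScalingNorm Φ + ⨆ ℓ : Fin L, ‖(Φ ℓ).2‖

/-! ### Auxiliary lemmas -/

theorem continuous_nnAffine' {N : ℕ → ℕ} {ℓ : ℕ} :
    Continuous (fun p : NNLayer N ℓ × (Fin (N ℓ) → ℝ) => nnAffine p.1 p.2) := by
  unfold nnAffine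
  fun_prop

theorem continuous_nnHidden (ρ : ℝ → ℝ) (hρ : Continuous ρ) :
    ∀ (L : ℕ) (N : ℕ → ℕ),
      Continuous (fun p : NNParams L N × (Fin (N 0) → ℝ) => nnHidden ρ L N p.1 p.2)
  | 0, N => by
      simp only [nnHidden]; exact continuous_snd
  | (L+1), N => by
      have IH := continuous_nnHidden ρ hρ L (fun k => N (k+1))
      have h1 : Continuous (fun p : NNParams (L+1) N × (Fin (N 0) → ℝ) =>
          ((fun ℓ : Fin L => p.1 ⟨ℓ.val + 1, Nat.succ_lt_succ ℓ.isLt⟩,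
            fun i => ρ (nnAffine (p.1 ⟨0, Nat.succ_pos L⟩) p.2 i)) :
            NNParams L (fun k => N (k+1)) × (Fin (N 1) → ℝ))) := by
        refine Continuous.prodMk ?_ ?_
        · fun_prop
        · refine continuous_pi fun i => hρ.comp ?_
          have := (continuous_nnAffine' (N := N) (ℓ := 0)).comp
            (f := fun p : NNParams (L+1) N × (Fin (N 0) → ℝ) => (p.1 ⟨0, Nat.succ_pos L⟩, p.2))
            (by fun_prop)
          exact (continuous_apply i).comp this
      simp only [nnHidden]
      exact IH.comp h1

theorem continuous_nnRealization (ρ : ℝ → ℝ) (hρ : Continuous ρ) (L : ℕ) (N : ℕ → ℕ) :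
    Continuous (fun p : NNParams L N × (Fin (N 0) → ℝ) => nnRealization ρ L N p.1 p.2) := by
  cases L with
  | zero => simp only [nnRealization]; exact continuous_snd
  | succ L =>
      simp only [nnRealization]
      have h2 := continuous_nnHidden ρ hρ L N
      exact continuous_nnAffine'.comp (by fun_prop : Continuous
        (fun p : NNParams (L+1) N × (Fin (N 0) → ℝ) =>
          ((p.1 ⟨L, Nat.lt_succ_self L⟩ : NNLayer N L),
           nnHidden ρ L N (fun ℓ => p.1 ⟨ℓ.val, Nat.lt_succ_of_lt ℓ.isLt⟩) p.2)))

theorem norm_le_nnTotalNorm {L : ℕ} {N : ℕ → ℕ} (hL : 0 < L) (Φ : NNParams L N) :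
    ‖Φ‖ ≤ nnTotalNorm Φ := by
  haveI : Nonempty (Fin L) := ⟨⟨0, hL⟩⟩
  have h1 : ∀ ℓ : Fin L, ‖(Φ ℓ).1‖ ≤ nnScalingNorm Φ := fun ℓ =>
    le_ciSup (f := fun ℓ : Fin L => ‖(Φ ℓ).1‖) (Set.Finite.bddAbove (Set.finite_range _)) ℓ
  have h2 : ∀ ℓ : Fin L, ‖(Φ ℓ).2‖ ≤ ⨆ ℓ : Fin L, ‖(Φ ℓ).2‖ := fun ℓ =>
    le_ciSup (f := fun ℓ : Fin L => ‖(Φ ℓ).2‖) (Set.Finite.bddAbove (Set.finite_range _)) ℓ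
  have hs1 : (0:ℝ) ≤ nnScalingNorm Φ :=
    le_trans (norm_nonneg _) (h1 (Classical.arbitrary _))
  have hs2 : (0:ℝ) ≤ ⨆ ℓ : Fin L, ‖(Φ ℓ).2‖ :=
    le_trans (norm_nonneg _) (h2 (Classical.arbitrary _))
  have htot : (0:ℝ) ≤ nnTotalNorm Φ := add_nonneg hs1 hs2
  rw [pi_norm_le_iff_of_nonneg htot]
  intro ℓ
  rw [Prod.norm_def]
  refine max_le ?_ ?_
  · exact le_trans (h1 ℓ) (le_add_of_nonneg_right hs2)
  · exact le_trans (h2 ℓ) (le_add_of_nonneg_left hs1)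

/-- If the regression function has no best approximation in the set of
realizations (w.r.t. `L²(σ_Ω)`), then the total norms of (approximate) empirical-risk
minimizers explode in probability as the number of i.i.d. samples grows. -/
theorem stmt5 (L : ℕ) (hL : 1 ≤ L) (N : ℕ → ℕ) (hN : ∀ ℓ ≤ L, 0 < N ℓ) (hNL : N L = 1)
    (B K : ℝ) (hB : 0 < B) (hK : 0 < K)
    (ρ : ℝ → ℝ) (hρ : LocallyLipschitz ρ)
    (σ : Measure ((Fin (N 0) → ℝ) × ℝ)) (hσ : IsProbabilityMeasure σ)
    (hσsupp : σ ((Set.Icc (fun _ => -B) (fun _ => B) ×ˢ Set.Icc (-K) K)ᶜ) = 0)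
    (fσ : (Fin (N 0) → ℝ) → ℝ) (hfσmeas : Measurable fσ)
    -- the defining property of the regression function: the bias-variance decomposition
    (hreg : ∀ f : (Fin (N 0) → ℝ) → ℝ, Measurable f →
      (∫⁻ z, ENNReal.ofReal ((f z.1 - z.2) ^ 2) ∂σ)
        = (∫⁻ z, ENNReal.ofReal ((fσ z.1 - z.2) ^ 2) ∂σ)
          + ∫⁻ x, ENNReal.ofReal ((f x - fσ x) ^ 2) ∂(σ.map Prod.fst))
    -- `fσ` has no best approximation in the set of realizations w.r.t. `L²(σ_Ω)`
    (hnobest : ¬ ∃ Φ : NNParams L N,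
      eLpNorm (fun x => fσ x - nnRealizationScalar ρ L N hNL Φ x) 2 (σ.map Prod.fst)
        = ⨅ Ψ : NNParams L N,
            eLpNorm (fun x => fσ x - nnRealizationScalar ρ L N hNL Ψ x) 2 (σ.map Prod.fst))
    -- an i.i.d. sample sequence with distribution σ
    (Ω' : Type) (mΩ' : MeasurableSpace Ω') (P : Measure Ω') (hP : IsProbabilityMeasure P)
    (X : ℕ → Ω' → (Fin (N 0) → ℝ) × ℝ) (hXmeas : ∀ i, Measurable (X i))
    (hXdist : ∀ i, Measure.map (X i) P = σ)
    (hXindep : ProbabilityTheory.iIndepFun X P)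
    -- a sequence of (random) networks asymptotically minimizing the empirical risk
    (Φseq : ℕ → Ω' → NNParams L N)
    (hmin : ∀ ε : ℝ, 0 < ε →
      Tendsto (fun n : ℕ => P {ω : Ω' |
          (1 / (n : ℝ)) * ∑ i ∈ Finset.range n,
              (nnRealizationScalar ρ L N hNL (Φseq n ω) (X i ω).1 - (X i ω).2) ^ 2
          - (⨅ Ψ : NNParams L N, (1 / (n : ℝ)) * ∑ i ∈ Finset.range n,
              (nnRealizationScalar ρ L N hNL Ψ (X i ω).1 - (X i ω).2) ^ 2) > ε})
        atTop (nhds 0)) :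
    -- then ‖Φ_N‖_total → ∞ in probability
    ∀ C : ℝ, Tendsto (fun n : ℕ => P {ω : Ω' | C ≤ nnTotalNorm (Φseq n ω)}) atTop (nhds 1) := by
  classical
  intro C
  -- notation
  set F : NNParams L N → (Fin (N 0) → ℝ) → ℝ := nnRealizationScalar ρ L N hNL with hF
  have hFcont : Continuous (fun p : NNParams L N × (Fin (N 0) → ℝ) => F p.1 p.2) := by
    exact (continuous_apply _).comp (continuous_nnRealization ρ hρ.continuous L N)
  set g : NNParams L N × ((Fin (N 0) → ℝ) × ℝ) → ℝ := fun q => (F q.1 q.2.1 - q.2.2) ^ 2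
    with hg
  have hgcont : Continuous g := by
    apply Continuous.pow
    exact (hFcont.comp (continuous_fst.prodMk (continuous_fst.comp continuous_snd))).sub
      (continuous_snd.comp continuous_snd)
  have hgnonneg : ∀ q, 0 ≤ g q := fun q => sq_nonneg _
  set supp : Set ((Fin (N 0) → ℝ) × ℝ) :=
    Set.Icc (fun _ => -B) (fun _ => B) ×ˢ Set.Icc (-K) K with hsupp
  have hsuppcompact : IsCompact supp := isCompact_Icc.prod isCompact_Icc
  have hsuppmeas : MeasurableSet supp := (measurableSet_Icc.prod measurableSet_Icc)
  have hsuppne : supp.Nonempty := by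
    refine ⟨(fun _ => 0, 0), Set.mk_mem_prod ?_ ?_⟩
    · rw [Set.mem_Icc]
      exact ⟨fun _ => neg_nonpos.mpr hB.le, fun _ => hB.le⟩
    · rw [Set.mem_Icc]
      exact ⟨neg_nonpos.mpr hK.le, hK.le⟩
  have hae : ∀ᵐ z ∂σ, z ∈ supp := MeasureTheory.ae_iff.mpr hσsupp
  set ν : Measure (Fin (N 0) → ℝ) := σ.map Prod.fst with hν
  -- each F Φ is measurable / continuous
  have hFΦcont : ∀ Φ : NNParams L N, Continuous (F Φ) := fun Φ =>
    hFcont.comp (Continuous.prodMk_right Φ)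
  have hgΦcont : ∀ Φ, Continuous (fun z => g (Φ, z)) := fun Φ =>
    hgcont.comp (Continuous.prodMk_right Φ)
  -- integrability of g (Φ, ·)
  have hint : ∀ Φ : NNParams L N, Integrable (fun z => g (Φ, z)) σ := by
    intro Φ
    obtain ⟨M, hM⟩ := hsuppcompact.exists_bound_of_continuousOn (hgΦcont Φ).continuousOn
    refine ⟨(hgΦcont Φ).aestronglyMeasurable, ?_⟩
    exact HasFiniteIntegral.of_bounded (C := M) (hae.mono fun z hz => hM z hz)
  -- real risk
  set Rr : NNParams L N → ℝ := fun Φ => ∫ z, g (Φ, z) ∂σ with hRr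
  have hRrnonneg : ∀ Φ, 0 ≤ Rr Φ := fun Φ => integral_nonneg fun z => hgnonneg _
  -- lintegral risk
  set ℛ : NNParams L N → ℝ≥0∞ := fun Φ => ∫⁻ z, ENNReal.ofReal ((F Φ z.1 - z.2) ^ 2) ∂σ
    with hℛ
  have hℛeq : ∀ Φ, ℛ Φ = ENNReal.ofReal (Rr Φ) := by
    intro Φ
    rw [hℛ, hRr]
    exact (ofReal_integral_eq_lintegral_ofReal (hint Φ)
      (Eventually.of_forall fun z => hgnonneg _)).symm
  have hℛne : ∀ Φ, ℛ Φ ≠ ∞ := fun Φ => by rw [hℛeq]; exact ENNReal.ofReal_ne_top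
  -- pointwise ENNReal square lemma
  have hsq : ∀ t : ℝ, ENNReal.ofReal (t ^ 2) = (‖t‖₊ : ℝ≥0∞) ^ (2 : ℝ) := by
    intro t
    rw [← sq_abs, ← Real.norm_eq_abs, ENNReal.ofReal_pow (norm_nonneg t),
      ofReal_norm, enorm_eq_nnnorm, ← ENNReal.rpow_natCast]
    norm_num
  -- eLpNorm as lintegral
  have hD : ∀ Φ : NNParams L N,
      eLpNorm (fun x => fσ x - F Φ x) 2 ν
        = (∫⁻ x, ENNReal.ofReal ((F Φ x - fσ x) ^ 2) ∂ν) ^ (1/2 : ℝ) := by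
    intro Φ
    rw [eLpNorm_eq_lintegral_rpow_enorm_toReal (by norm_num) (by norm_num)]
    simp only [ENNReal.toReal_ofNat]
    congr 1
    refine lintegral_congr fun x => ?_
    rw [hsq]
    rw [show fσ x - F Φ x = -(F Φ x - fσ x) by ring, enorm_neg, enorm_eq_nnnorm]
  -- `key`: no Φ₀ can dominate every Ψ in risk
  have key : ∀ Φ₀ : NNParams L N, (∀ Ψ, ℛ Φ₀ ≤ ℛ Ψ) → False := by
    intro Φ₀ hΦ₀
    apply hnobest
    have hA : (∫⁻ z, ENNReal.ofReal ((fσ z.1 - z.2) ^ 2) ∂σ) ≠ ∞ := by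
      have h0 := hreg (F Φ₀) (hFΦcont Φ₀).measurable
      intro hcon
      apply hℛne Φ₀
      show (∫⁻ z, ENNReal.ofReal ((F Φ₀ z.1 - z.2) ^ 2) ∂σ) = ⊤
      rw [h0, hcon]; simp
    have hJle : ∀ Ψ, (∫⁻ x, ENNReal.ofReal ((F Φ₀ x - fσ x) ^ 2) ∂ν)
        ≤ ∫⁻ x, ENNReal.ofReal ((F Ψ x - fσ x) ^ 2) ∂ν := by
      intro Ψ
      have h1 := hreg (F Φ₀) (hFΦcont Φ₀).measurable
      have h2 := hreg (F Ψ) (hFΦcont Ψ).measurable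
      have h3 : (∫⁻ z, ENNReal.ofReal ((F Φ₀ z.1 - z.2) ^ 2) ∂σ)
          ≤ ∫⁻ z, ENNReal.ofReal ((F Ψ z.1 - z.2) ^ 2) ∂σ := hΦ₀ Ψ
      rw [h1, h2] at h3
      rename' h3 => this
      exact (ENNReal.add_le_add_iff_left hA).mp this
    refine ⟨Φ₀, le_antisymm (le_iInf fun Ψ => ?_) (iInf_le _ _)⟩
    rw [hD, hD]
    exact ENNReal.rpow_le_rpow (hJle Ψ) (by norm_num)
  -- the compact parameter ball
  set S : Set (NNParams L N) := Metric.closedBall 0 (max C 0) with hS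
  have hScompact : IsCompact S := isCompact_closedBall _ _
  have hSne : S.Nonempty := ⟨0, Metric.mem_closedBall_self (le_max_right _ _)⟩
  -- uniform continuity of g on S ×ˢ supp
  have hUC : ∀ ε : ℝ, 0 < ε → ∃ δ > (0:ℝ), ∀ Φ ∈ S, ∀ Φ' ∈ S, dist Φ Φ' < δ →
      ∀ z ∈ supp, |g (Φ, z) - g (Φ', z)| < ε := by
    intro ε hε
    have hcomp : IsCompact (S ×ˢ supp) := hScompact.prod hsuppcompact
    have huc := hcomp.uniformContinuousOn_of_continuous hgcont.continuousOn
    rw [Metric.uniformContinuousOn_iff] at huc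
    obtain ⟨δ, hδ, hδ'⟩ := huc ε hε
    refine ⟨δ, hδ, fun Φ hΦ Φ' hΦ' hd z hz => ?_⟩
    have := hδ' (Φ, z) (Set.mk_mem_prod hΦ hz) (Φ', z) (Set.mk_mem_prod hΦ' hz)
      (by rw [Prod.dist_eq, dist_self, max_eq_left dist_nonneg]; exact hd)
    rwa [Real.dist_eq] at this
  -- continuity of the true risk on S
  have hRrcont : ContinuousOn Rr S := by
    rw [Metric.continuousOn_iff]
    intro Φ hΦ ε hε
    obtain ⟨δ, hδpos, hδ⟩ := hUC (ε/2) (by linarith)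
    refine ⟨δ, hδpos, fun Φ' hΦ' hd => ?_⟩
    rw [Real.dist_eq]
    have hsub : |Rr Φ' - Rr Φ| ≤ ε/2 := by
      have heq : Rr Φ' - Rr Φ = ∫ z, (g (Φ', z) - g (Φ, z)) ∂σ := by
        rw [integral_sub (hint Φ') (hint Φ)]
      rw [heq]
      have hb := norm_integral_le_of_norm_le_const (μ := σ) (C := ε/2)
        (f := fun z : (Fin (N 0) → ℝ) × ℝ => g (Φ', z) - g (Φ, z))
        (hae.mono fun z hz => by
          rw [Real.norm_eq_abs]; exact (hδ Φ' hΦ' Φ hΦ hd z hz).le)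
      simpa [measure_univ, Real.norm_eq_abs] using hb
    linarith [abs_nonneg (Rr Φ' - Rr Φ)]
  -- minimizer on the compact ball
  obtain ⟨Φs, hΦsS, hΦsmin⟩ := hScompact.exists_isMinOn hSne hRrcont
  -- strict gap below the constrained minimum
  obtain ⟨Ψs, hΨs⟩ : ∃ Ψ, ℛ Ψ < ℛ Φs := by
    by_contra h
    push_neg at h
    exact key Φs h
  have hΨsR : Rr Ψs < Rr Φs := by
    rw [hℛeq, hℛeq] at hΨs
    exact (ENNReal.ofReal_lt_ofReal_iff_of_nonneg (hRrnonneg _)).mp hΨs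
  set ε : ℝ := (Rr Φs - Rr Ψs)/5 with hεdef
  have hε : 0 < ε := by rw [hεdef]; linarith
  obtain ⟨δ, hδpos, hδ⟩ := hUC ε hε
  -- finite δ-net of S
  have hcov : S ⊆ ⋃ c ∈ S, Metric.ball c δ := fun Φ hΦ =>
    Set.mem_biUnion hΦ (Metric.mem_ball_self hδpos)
  obtain ⟨t, htS, htfin, htcov⟩ := hScompact.elim_finite_subcover_image
    (fun c _ => Metric.isOpen_ball) hcov
  -- law of large numbers for a fixed network
  have lln : ∀ Ψ : NNParams L N,
      Tendsto (fun n : ℕ => P {ω : Ω' |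
        ε ≤ |(1 / (n:ℝ)) * (∑ i ∈ Finset.range n, g (Ψ, X i ω)) - Rr Ψ|}) atTop (𝓝 0) := by
    intro Ψ
    have hgm : Measurable (fun z => g (Ψ, z)) := (hgΦcont Ψ).measurable
    set Y : ℕ → Ω' → ℝ := fun i => (fun z => g (Ψ, z)) ∘ (X i) with hYdef
    have hYmeas : ∀ i, Measurable (Y i) := fun i => hgm.comp (hXmeas i)
    have hident : ∀ i, ProbabilityTheory.IdentDistrib (Y i) (Y 0) P P := by
      intro i
      have hXi : ProbabilityTheory.IdentDistrib (X i) (X 0) P P :=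
        ⟨(hXmeas i).aemeasurable, (hXmeas 0).aemeasurable, by rw [hXdist i, hXdist 0]⟩
      exact hXi.comp hgm
    have hindep : Pairwise (Function.onFun (ProbabilityTheory.IndepFun · · P) Y) := fun i j hij =>
      (hXindep.indepFun hij).comp hgm hgm
    have hYint : Integrable (Y 0) P := by
      have h1 : Integrable (fun z => g (Ψ, z)) (Measure.map (X 0) P) := by
        rw [hXdist 0]; exact hint Ψ
      exact (integrable_map_measure
        (by rw [hXdist 0]; exact (hgΦcont Ψ).aestronglyMeasurable)
        (hXmeas 0).aemeasurable).mp h1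
    have hEY : Rr Ψ = ∫ ω, Y 0 ω ∂P := by
      show (∫ z, g (Ψ, z) ∂σ) = _
      rw [← hXdist 0, integral_map (hXmeas 0).aemeasurable
        (by rw [hXdist 0]; exact (hgΦcont Ψ).aestronglyMeasurable)]
      rfl
    have hslln := ProbabilityTheory.strong_law_ae_real Y hYint hindep hident
    have htm : TendstoInMeasure P (fun (n : ℕ) ω => (∑ i ∈ Finset.range n, Y i ω) / (n:ℝ))
        atTop (fun _ => ∫ ω, Y 0 ω ∂P) := by
      apply tendstoInMeasure_of_tendsto_ae
      · intro n
        exact ((Finset.measurable_sum _ fun i _ => hYmeas i).div_const _).aestronglyMeasurable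
      · exact hslln
    have := tendstoInMeasure_iff_dist.mp htm ε hε
    have hsets : ∀ n : ℕ, {ω : Ω' | ε ≤ |(1 / (n:ℝ)) * (∑ i ∈ Finset.range n, g (Ψ, X i ω)) - Rr Ψ|}
        = {ω : Ω' | ε ≤ dist ((∑ i ∈ Finset.range n, Y i ω) / (n:ℝ)) (∫ ω, Y 0 ω ∂P)} := by
      intro n
      ext ω
      simp only [Set.mem_setOf_eq, Real.dist_eq, ← hEY, one_div, inv_mul_eq_div]
      rfl
    simpa only [hsets] using this
  -- the samples are almost surely in the support
  have hG : P {ω : Ω' | ¬ ∀ i, X i ω ∈ supp} = 0 := by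
    have hset : {ω : Ω' | ¬ ∀ i, X i ω ∈ supp} = ⋃ i, (X i) ⁻¹' suppᶜ := by
      ext ω; simp
    rw [hset]
    refine measure_iUnion_null fun i => ?_
    have : P ((X i) ⁻¹' suppᶜ) = σ suppᶜ := by
      rw [← hXdist i, Measure.map_apply (hXmeas i) hsuppmeas.compl]
    rw [this]; exact hσsupp
  -- bad events
  set Bad1 : ℕ → Set Ω' := fun n => {ω : Ω' |
      (1 / (n : ℝ)) * ∑ i ∈ Finset.range n, (F (Φseq n ω) (X i ω).1 - (X i ω).2) ^ 2
      - (⨅ Ψ : NNParams L N, (1 / (n : ℝ)) * ∑ i ∈ Finset.range n,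
          (F Ψ (X i ω).1 - (X i ω).2) ^ 2) > ε} with hBad1def
  set Bad4 : NNParams L N → ℕ → Set Ω' := fun c n => {ω : Ω' |
      ε ≤ |(1 / (n:ℝ)) * (∑ i ∈ Finset.range n, g (c, X i ω)) - Rr c|} with hBad4def
  set G : Set Ω' := {ω : Ω' | ∀ i, X i ω ∈ supp} with hGdef
  -- key inclusion
  have hincl : ∀ n : ℕ, {ω : Ω' | C ≤ nnTotalNorm (Φseq n ω)}ᶜ ⊆
      ((Bad1 n ∪ Gᶜ) ∪ Bad4 Ψs n) ∪ ⋃ c ∈ t, Bad4 c n := by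
    intro n ω hω
    by_contra hcon
    simp only [Set.mem_union, Set.mem_iUnion, not_or, not_exists, Set.mem_compl_iff,
      not_not] at hcon
    obtain ⟨⟨⟨h1, h2⟩, h3⟩, h4⟩ := hcon
    have htot : nnTotalNorm (Φseq n ω) < C := not_le.mp hω
    set Φ : NNParams L N := Φseq n ω with hΦdef
    have hΦS : Φ ∈ S := by
      rw [hS, Metric.mem_closedBall, dist_zero_right]
      exact le_trans (norm_le_nnTotalNorm hL Φ) (le_trans htot.le (le_max_left _ _))
    obtain ⟨c, hct, hcball⟩ : ∃ c ∈ t, Φ ∈ Metric.ball c δ := by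
      simpa using htcov hΦS
    have hcS : c ∈ S := htS hct
    -- empirical risks
    set e : NNParams L N → ℝ := fun Ψ =>
      (1 / (n:ℝ)) * ∑ i ∈ Finset.range n, g (Ψ, X i ω) with hedef
    have hbdd : BddBelow (Set.range e) := by
      refine ⟨0, ?_⟩
      rintro v ⟨Ψ, rfl⟩
      exact mul_nonneg (by positivity) (Finset.sum_nonneg fun i _ => hgnonneg _)
    -- (i) the empirical risk of Φ is close to that of the center c
    have hstep1 : e c - e Φ ≤ ε := by
      have hterm : ∀ i ∈ Finset.range n, g (c, X i ω) - g (Φ, X i ω) ≤ ε := by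
        intro i _
        have := hδ Φ hΦS c hcS (Metric.mem_ball.mp hcball) (X i ω) (h2 i)
        have habs := (abs_lt.mp this).1
        linarith
      have hsum : (∑ i ∈ Finset.range n, (g (c, X i ω) - g (Φ, X i ω))) ≤ (n : ℝ) * ε := by
        calc (∑ i ∈ Finset.range n, (g (c, X i ω) - g (Φ, X i ω)))
            ≤ (Finset.range n).card • ε := Finset.sum_le_card_nsmul _ _ _ hterm
          _ = (n : ℝ) * ε := by simp [nsmul_eq_mul]
      have : e c - e Φ = (1 / (n:ℝ)) * ∑ i ∈ Finset.range n, (g (c, X i ω) - g (Φ, X i ω)) := by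
        rw [hedef]
        simp only [Finset.sum_sub_distrib, mul_sub]
      rw [this]
      rcases Nat.eq_zero_or_pos n with hn | hn
      · simp [hn]; exact hε.le
      · have hnpos : (0:ℝ) < n := by exact_mod_cast hn
        calc (1 / (n:ℝ)) * ∑ i ∈ Finset.range n, (g (c, X i ω) - g (Φ, X i ω))
            ≤ (1 / (n:ℝ)) * ((n:ℝ) * ε) := by
              apply mul_le_mul_of_nonneg_left hsum (by positivity)
          _ = ε := by field_simp
    -- (ii) the infimum is at most the empirical risk of Ψs
    have hinf_le : (⨅ Ψ : NNParams L N, (1 / (n : ℝ)) * ∑ i ∈ Finset.range n,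
        (F Ψ (X i ω).1 - (X i ω).2) ^ 2) ≤ e Ψs := ciInf_le hbdd Ψs
    -- (iii) approximate minimality
    have h1' : e Φ ≤ (⨅ Ψ : NNParams L N, (1 / (n : ℝ)) * ∑ i ∈ Finset.range n,
        (F Ψ (X i ω).1 - (X i ω).2) ^ 2) + ε := by
      have h := h1
      rw [hBad1def] at h
      simp only [Set.mem_setOf_eq, not_lt] at h
      have h' : e Φ - (⨅ Ψ : NNParams L N, (1 / (n : ℝ)) * ∑ i ∈ Finset.range n,
          (F Ψ (X i ω).1 - (X i ω).2) ^ 2) ≤ ε := h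
      linarith
    -- (iv) LLN control at Ψs and c
    have h3' : e Ψs ≤ Rr Ψs + ε := by
      have h := h3
      simp only [hBad4def, Set.mem_setOf_eq, not_le] at h
      have h' : |e Ψs - Rr Ψs| < ε := h
      have h'' := (abs_lt.mp h').2
      linarith
    have h4' : Rr c - ε ≤ e c := by
      have h := h4 c hct
      simp only [hBad4def, Set.mem_setOf_eq, not_le] at h
      have h' : |e c - Rr c| < ε := h
      have h'' := (abs_lt.mp h').1
      linarith
    -- (v) the center risk dominates the constrained minimum
    have h5 : Rr Φs ≤ Rr c := isMinOn_iff.mp hΦsmin c hcS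
    -- contradiction
    have : Rr Φs - Rr Ψs ≤ 4 * ε := by linarith
    rw [hεdef] at this
    linarith
  -- measure bound
  set s : ℕ → ℝ≥0∞ := fun n =>
    P (Bad1 n) + P (Bad4 Ψs n) + ∑ c ∈ htfin.toFinset, P (Bad4 c n) with hsdef
  have hGc : P Gᶜ = 0 := by
    show P ({ω : Ω' | ∀ i, X i ω ∈ supp})ᶜ = 0
    rw [Set.compl_setOf]
    exact hG
  have hcompl : ∀ n : ℕ, P ({ω : Ω' | C ≤ nnTotalNorm (Φseq n ω)}ᶜ) ≤ s n := by
    intro n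
    have h2 : P (((Bad1 n ∪ Gᶜ) ∪ Bad4 Ψs n) ∪ ⋃ c ∈ t, Bad4 c n)
        ≤ ((P (Bad1 n) + P Gᶜ) + P (Bad4 Ψs n)) + ∑ c ∈ htfin.toFinset, P (Bad4 c n) := by
      refine le_trans (measure_union_le _ _) (add_le_add (le_trans (measure_union_le _ _)
        (add_le_add (measure_union_le _ _) le_rfl)) ?_)
      rw [show (⋃ c ∈ t, Bad4 c n) = ⋃ c ∈ htfin.toFinset, Bad4 c n by
        simp [Set.Finite.mem_toFinset]]
      exact measure_biUnion_finset_le _ _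
    calc P ({ω : Ω' | C ≤ nnTotalNorm (Φseq n ω)}ᶜ)
        ≤ _ := measure_mono (hincl n)
      _ ≤ ((P (Bad1 n) + P Gᶜ) + P (Bad4 Ψs n)) + ∑ c ∈ htfin.toFinset, P (Bad4 c n) := h2
      _ = s n := by rw [hGc, add_zero, hsdef]
  -- the bad probabilities tend to zero
  have hstend : Tendsto s atTop (𝓝 0) := by
    have ht1 : Tendsto (fun n => P (Bad1 n)) atTop (𝓝 0) := hmin ε hε
    have ht2 : Tendsto (fun n => P (Bad4 Ψs n)) atTop (𝓝 0) := lln Ψs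
    have ht3 : Tendsto (fun n : ℕ => ∑ c ∈ htfin.toFinset, P (Bad4 c n)) atTop
        (𝓝 (∑ _c ∈ htfin.toFinset, 0)) :=
      tendsto_finset_sum htfin.toFinset (fun c _ => lln c)
    rw [Finset.sum_const_zero] at ht3
    have hfin : Tendsto (fun n : ℕ => P (Bad1 n) + P (Bad4 Ψs n)
        + ∑ c ∈ htfin.toFinset, P (Bad4 c n)) atTop (𝓝 (0 + 0 + 0)) :=
      (ht1.add ht2).add ht3
    simpa only [add_zero] using hfin
  -- conclude
  have hupper : ∀ n : ℕ, P {ω : Ω' | C ≤ nnTotalNorm (Φseq n ω)} ≤ 1 := fun n =>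
    prob_le_one
  have hlower : ∀ n : ℕ, 1 - s n ≤ P {ω : Ω' | C ≤ nnTotalNorm (Φseq n ω)} := by
    intro n
    rw [tsub_le_iff_right]
    calc (1:ℝ≥0∞) = P Set.univ := measure_univ.symm
      _ = P ({ω : Ω' | C ≤ nnTotalNorm (Φseq n ω)} ∪ {ω : Ω' | C ≤ nnTotalNorm (Φseq n ω)}ᶜ) := by
          rw [Set.union_compl_self]
      _ ≤ P {ω : Ω' | C ≤ nnTotalNorm (Φseq n ω)}
          + P ({ω : Ω' | C ≤ nnTotalNorm (Φseq n ω)}ᶜ) := measure_union_le _ _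
      _ ≤ P {ω : Ω' | C ≤ nnTotalNorm (Φseq n ω)} + s n := add_le_add le_rfl (hcompl n)
  have hlim : Tendsto (fun n : ℕ => (1:ℝ≥0∞) - s n) atTop (𝓝 1) := by
    have := ENNReal.Tendsto.sub (tendsto_const_nhds (x := (1:ℝ≥0∞))) hstend
      (Or.inl ENNReal.one_ne_top)
    simpa using this
  exact tendsto_of_tendsto_of_tendsto_of_le_of_le hlim tendsto_const_nhds hlower hupper
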